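/- If G₁ and G₂ are term graphs over the λ-signature with scope delimiters, both carry correct abstraction-prefix functions P₁ and P₂, and h : G₁ → G₂ is a homomorphism of the underlying term graphs, then h automatically respects the abstraction prefixes: the homomorphic extension of h maps P₁(w) to P₂(h w) for every vertex w. Consequently, the class of λ-term-graphs admitting a correct abstraction-prefix function is such that homomorphic images of prefixes are determined. -/
import Mathlib


/-- A (root-connected) term graph over signature `Sig` with arity function `ar`,
    with vertex type `V`. -/
structure TermGraph (Sig : Type) (ar : Sig → ℕ) (V : Type) where
  lab : V → Sig
  args : V → List V
  root : V
  arity_ok : ∀ v, (args v).length = ar (lab v)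
  rooted : ∀ v, Relation.ReflTransGen (fun a b => b ∈ args a) root v

/-- `R` is a bisimulation between term graphs `G₁` and `G₂`. -/
def IsBisim {Sig : Type} {ar : Sig → ℕ} {V₁ V₂ : Type}
    (G₁ : TermGraph Sig ar V₁) (G₂ : TermGraph Sig ar V₂)
    (R : V₁ → V₂ → Prop) : Prop :=
  R G₁.root G₂.root ∧
  (∀ v w, R v w → G₁.lab v = G₂.lab w) ∧
  (∀ v w, R v w → List.Forall₂ R (G₁.args v) (G₂.args w))

/-- `G₁` and `G₂` are bisimilar. -/
def Bisim {Sig : Type} {ar : Sig → ℕ} {V₁ V₂ : Type}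
    (G₁ : TermGraph Sig ar V₁) (G₂ : TermGraph Sig ar V₂) : Prop :=
  ∃ R, IsBisim G₁ G₂ R

/-- `h` is a homomorphism of term graphs: it maps root to root, preserves labels,
    and commutes with the argument function. -/
def IsHom {Sig : Type} {ar : Sig → ℕ} {V₁ V₂ : Type}
    (G₁ : TermGraph Sig ar V₁) (G₂ : TermGraph Sig ar V₂) (h : V₁ → V₂) : Prop :=
  h G₁.root = G₂.root ∧
  (∀ v, G₂.lab (h v) = G₁.lab v) ∧
  (∀ v, G₂.args (h v) = (G₁.args v).map h)

/-- There exists a functional bisimulation (homomorphism) from `G₁` to `G₂`. -/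
def FunBisim {Sig : Type} {ar : Sig → ℕ} {V₁ V₂ : Type}
    (G₁ : TermGraph Sig ar V₁) (G₂ : TermGraph Sig ar V₂) : Prop :=
  ∃ h, IsHom G₁ G₂ h

/-- The signature for first-order lambda term graphs with scope delimiters:
    application, abstraction, variable occurrence, scope delimiter, black hole. -/
inductive LamSig : Type
  | app | lam | var | del | bh
deriving DecidableEq

/-- Arities for the lambda signature with scope delimiters. -/
def arL : LamSig → ℕ
  | .app => 2
  | .lam => 1
  | .var => 1
  | .del => 2
  | .bh  => 0

/-- A correct abstraction-prefix function for a term graph over the lambda signature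
    with scope delimiters. -/
structure CorrectPrefix {V : Type} (G : TermGraph LamSig arL V)
    (P : V → List V) : Prop where
  root : P G.root = []
  blackhole : ∀ v, G.lab v = LamSig.bh → P v = []
  lamCond : ∀ w v, G.lab w = LamSig.lam → (G.args w)[0]? = some v →
    P v = P w ++ [w]
  appCond : ∀ w v (k : ℕ), G.lab w = LamSig.app → (G.args w)[k]? = some v →
    P v = P w
  varCond : ∀ w v, G.lab w = LamSig.var → (G.args w)[0]? = some v →
    G.lab v = LamSig.lam ∧ P v ++ [v] = P w
  delCond0 : ∀ w v, G.lab w = LamSig.del → (G.args w)[0]? = some v →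
    ∃ u, P v ++ [u] = P w
  delCond1 : ∀ w v, G.lab w = LamSig.del → (G.args w)[1]? = some v →
    G.lab v = LamSig.lam ∧ P v ++ [v] = P w

/-- A homomorphism between the underlying term graphs of two lambda term graphs
    (term graphs over the lambda signature with scope delimiters, carrying correct
    abstraction-prefix functions) automatically respects the abstraction prefixes:
    the letter-wise extension of the homomorphism maps the prefix of a vertex to the
    prefix of its image. -/
theorem hom_respects_prefixes {V₁ V₂ : Type}
    (G₁ : TermGraph LamSig arL V₁) (G₂ : TermGraph LamSig arL V₂)
    (P₁ : V₁ → List V₁) (P₂ : V₂ → List V₂)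
    (hP₁ : CorrectPrefix G₁ P₁) (hP₂ : CorrectPrefix G₂ P₂)
    (h : V₁ → V₂) (hh : IsHom G₁ G₂ h) :
    ∀ w, (P₁ w).map h = P₂ (h w) := by
  obtain ⟨hroot, hlab, hargs⟩ := hh
  intro w
  have key : ∀ w, Relation.ReflTransGen (fun a b => b ∈ G₁.args a) G₁.root w →
      (P₁ w).map h = P₂ (h w) := by
    intro w hw
    induction hw with
    | refl => rw [hP₁.root, hroot, hP₂.root]; rfl
    | tail hstep hmem ih =>
      rename_i v c
      obtain ⟨k, hk, hkc⟩ := List.getElem_of_mem hmem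
      have hk1 : (G₁.args v)[k]? = some c := by
        rw [List.getElem?_eq_getElem hk, hkc]
      have hk2 : (G₂.args (h v))[k]? = some (h c) := by
        rw [hargs v, List.getElem?_map, hk1]; rfl
      have hlen := G₁.arity_ok v
      cases hL : G₁.lab v with
      | app =>
        rw [hP₁.appCond v c k hL hk1,
          hP₂.appCond (h v) (h c) k (by rw [hlab v, hL]) hk2, ih]
      | lam =>
        have hk0 : k = 0 := by
          rw [hL] at hlen; simp [arL] at hlen; omega
        subst hk0
        rw [hP₁.lamCond v c hL hk1,
          hP₂.lamCond (h v) (h c) (by rw [hlab v, hL]) hk2,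
          List.map_append, ih]
        rfl
      | var =>
        have hk0 : k = 0 := by
          rw [hL] at hlen; simp [arL] at hlen; omega
        subst hk0
        have h1 := (hP₁.varCond v c hL hk1).2
        have h2 := (hP₂.varCond (h v) (h c) (by rw [hlab v, hL]) hk2).2
        have : (P₁ c).map h ++ [h c] = P₂ (h c) ++ [h c] := by
          have := congrArg (List.map h) h1
          rw [List.map_append] at this; simp only [List.map_cons, List.map_nil] at this
          rw [this, ih, ← h2]
        exact (List.append_inj' this rfl).1
      | del =>
        have hk01 : k = 0 ∨ k = 1 := by
          rw [hL] at hlen; simp [arL] at hlen; omega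
        rcases hk01 with hk0 | hk0 <;> subst hk0
        · obtain ⟨u, h1⟩ := hP₁.delCond0 v c hL hk1
          obtain ⟨u', h2⟩ := hP₂.delCond0 (h v) (h c) (by rw [hlab v, hL]) hk2
          have : (P₁ c).map h ++ [h u] = P₂ (h c) ++ [u'] := by
            have := congrArg (List.map h) h1
            rw [List.map_append] at this; simp only [List.map_cons, List.map_nil] at this
            rw [this, ih, ← h2]
          exact (List.append_inj' this rfl).1
        · have h1 := (hP₁.delCond1 v c hL hk1).2
          have h2 := (hP₂.delCond1 (h v) (h c) (by rw [hlab v, hL]) hk2).2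
          have : (P₁ c).map h ++ [h c] = P₂ (h c) ++ [h c] := by
            have := congrArg (List.map h) h1
            rw [List.map_append] at this; simp only [List.map_cons, List.map_nil] at this
            rw [this, ih, ← h2]
          exact (List.append_inj' this rfl).1
      | bh =>
        exfalso
        rw [hL] at hlen; simp [arL] at hlen
        rw [hlen] at hmem; simp at hmem
  exact key w (G₁.rooted w)
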